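/- arXiv:1507.00303 — 3 statements merged into one kernel-verified Lean document; each statement's English description precedes it below -/
import Mathlib

section
/- (Hayashi's pinching inequality) Let H be a self-adjoint operator on a finite-dimensional Hilbert space whose spectral decomposition has L distinct eigenvalues with projectors P_1,...,P_L. Then for every positive semidefinite operator X, the operator inequality P_H(X) ≥ X / L holds, where P_H(X) = Σ_x P_x X P_x. -/
open scoped ComplexOrder
open Matrix Finset

lemma dot_conjT_mul {A : Type*} [Fintype A] (M : Matrix A A ℂ) (v : A → ℂ) :
    star v ⬝ᵥ (Mᴴ * M).mulVec v = star (M.mulVec v) ⬝ᵥ (M.mulVec v) := by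
  rw [← mulVec_mulVec, dotProduct_mulVec, vecMul_conjTranspose, star_star]

lemma dot_self_eq {A : Type*} [Fintype A] (v : A → ℂ) :
    star v ⬝ᵥ v = ((∑ a, Complex.normSq (v a) : ℝ) : ℂ) := by
  simp [dotProduct, Complex.normSq_eq_conj_mul_self]

lemma normSq_sum_le {ι : Type*} [Fintype ι] (z : ι → ℂ) :
    Complex.normSq (∑ x, z x) ≤ (Fintype.card ι) * ∑ x, Complex.normSq (z x) := by
  calc Complex.normSq (∑ x, z x) = ‖∑ x, z x‖ ^ 2 := (Complex.sq_norm _).symm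
    _ ≤ (∑ x, ‖z x‖) ^ 2 := by
        have := norm_sum_le (univ : Finset _) z
        gcongr
    _ ≤ (Fintype.card ι) * ∑ x, ‖z x‖ ^ 2 := by
        simpa using sq_sum_le_card_mul_sum_sq (s := (univ : Finset ι)) (f := fun x => ‖z x‖)
    _ = (Fintype.card ι) * ∑ x, Complex.normSq (z x) := by simp [Complex.sq_norm]

lemma my_sum_mulVec {ι A : Type*} [Fintype ι] [Fintype A] (M : ι → Matrix A A ℂ) (v : A → ℂ) :
    (∑ x, M x) *ᵥ v = ∑ x, M x *ᵥ v := by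
  ext a
  simp only [Matrix.mulVec, dotProduct, Finset.sum_apply, Matrix.sum_apply,
    Finset.sum_mul]
  rw [Finset.sum_comm]

lemma my_mulVec_sum {ι A : Type*} [Fintype ι] [Fintype A] (M : Matrix A A ℂ) (v : ι → A → ℂ) :
    M *ᵥ (∑ x, v x) = ∑ x, M *ᵥ v x := by
  ext a
  simp only [Matrix.mulVec, dotProduct, Finset.sum_apply, Finset.mul_sum]
  rw [Finset.sum_comm]

lemma my_dotProduct_sum {ι A : Type*} [Fintype ι] [Fintype A] (v : A → ℂ) (w : ι → A → ℂ) :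
    v ⬝ᵥ (∑ x, w x) = ∑ x, v ⬝ᵥ w x := by
  simp only [dotProduct, Finset.sum_apply, Finset.mul_sum]
  rw [Finset.sum_comm]

/-- the pinching map associated to a family of projectors. -/
noncomputable def pinch {A ι : Type*} [Fintype A] [DecidableEq A] [Fintype ι] (P : ι → Matrix A A ℂ)
    (X : Matrix A A ℂ) : Matrix A A ℂ :=
  ∑ x, P x * X * P x

/-- **Hayashi's pinching inequality.** If `H = ∑ x, μ x • P x` is the spectral decomposition
of a self-adjoint operator into `L` distinct eigenvalues (`L = Fintype.card ι`), then for
every positive semidefinite `X` one has `P_H(X) ≥ X / L` in the Loewner order. -/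
theorem pinching_inequality
    {A ι : Type*} [Fintype A] [DecidableEq A] [Fintype ι] [DecidableEq ι]
    (P : ι → Matrix A A ℂ) (μ : ι → ℝ) (H : Matrix A A ℂ)
    (hHerm : ∀ x, (P x).IsHermitian)
    (horth : ∀ x y, P x * P y = if x = y then P x else 0)
    (hsum : ∑ x, P x = 1)
    (hμ : Function.Injective μ)
    (hH : H = ∑ x, (μ x : ℂ) • P x)
    (X : Matrix A A ℂ) (hX : X.PosSemidef) :
    (pinch P X - ((Fintype.card ι : ℂ))⁻¹ • X).PosSemidef := by
  classical
  obtain ⟨B, hB⟩ : ∃ B : Matrix A A ℂ, X = Bᴴ * B := by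
    open scoped MatrixOrder Matrix.Norms.L2Operator in
    obtain ⟨B, hB⟩ := CStarAlgebra.nonneg_iff_eq_star_mul_self.mp hX.nonneg
    exact ⟨B, by rw [hB, star_eq_conjTranspose]⟩
  have hPH : ∀ x, (P x)ᴴ = P x := fun x => hHerm x
  have hXH : Xᴴ = X := hX.1
  rw [Matrix.posSemidef_iff_dotProduct_mulVec]
  constructor
  · -- Hermitian part
    show (pinch P X - _)ᴴ = _
    simp [pinch, Matrix.conjTranspose_sub, Matrix.conjTranspose_sum, Matrix.conjTranspose_smul,
      Matrix.conjTranspose_mul, hPH, hXH, mul_assoc]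
  · intro y
    set L : ℕ := Fintype.card ι with hL
    set u : ι → A → ℂ := fun x => B.mulVec ((P x).mulVec y) with hu
    set n : (A → ℂ) → ℝ := fun v => ∑ a, Complex.normSq (v a) with hn
    have hwy : ∑ x, (P x).mulVec y = y := by
      have := congrArg (fun M : Matrix A A ℂ => M.mulVec y) hsum
      simpa [my_sum_mulVec] using this
    have hsu : ∑ x, u x = B.mulVec y := by
      simp only [hu]
      rw [← my_mulVec_sum, hwy]
    have hpinch : star y ⬝ᵥ (pinch P X).mulVec y = ((∑ x, n (u x) : ℝ) : ℂ) := by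
      rw [pinch, my_sum_mulVec, my_dotProduct_sum]
      push_cast
      refine Finset.sum_congr rfl fun x _ => ?_
      have hfac : P x * X * P x = (B * P x)ᴴ * (B * P x) := by
        rw [Matrix.conjTranspose_mul, hPH, hB]; simp [mul_assoc]
      rw [hfac, dot_conjT_mul, ← Matrix.mulVec_mulVec, dot_self_eq]
    have hXq : star y ⬝ᵥ X.mulVec y = ((n (∑ x, u x) : ℝ) : ℂ) := by
      rw [hB, dot_conjT_mul, dot_self_eq, hsu]
    -- real inequality
    have hreal : (L : ℝ)⁻¹ * n (∑ x, u x) ≤ ∑ x, n (u x) := by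
      have h1 : n (∑ x, u x) ≤ (L : ℝ) * ∑ x, n (u x) := by
        rw [hn]
        simp only [Finset.sum_apply]
        calc ∑ a, Complex.normSq (∑ x, u x a)
            ≤ ∑ a, (L : ℝ) * ∑ x, Complex.normSq (u x a) :=
              Finset.sum_le_sum fun a _ => normSq_sum_le _
          _ = (L : ℝ) * ∑ x, ∑ a, Complex.normSq (u x a) := by
              rw [← Finset.mul_sum, Finset.sum_comm]
      have hT : (0:ℝ) ≤ ∑ x, n (u x) :=
        Finset.sum_nonneg fun x _ => Finset.sum_nonneg fun a _ => Complex.normSq_nonneg _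
      calc (L : ℝ)⁻¹ * n (∑ x, u x) ≤ (L : ℝ)⁻¹ * ((L : ℝ) * ∑ x, n (u x)) := by
            apply mul_le_mul_of_nonneg_left h1 (by positivity)
        _ = ((L : ℝ)⁻¹ * (L : ℝ)) * ∑ x, n (u x) := by ring
        _ ≤ 1 * ∑ x, n (u x) := by
            apply mul_le_mul_of_nonneg_right _ hT
            rcases eq_or_ne (L : ℝ) 0 with h | h
            · simp [h]
            · rw [inv_mul_cancel₀ h]
        _ = ∑ x, n (u x) := one_mul _
    -- combine
    rw [Matrix.sub_mulVec, dotProduct_sub, Matrix.smul_mulVec, dotProduct_smul]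
    rw [hpinch, hXq]
    rw [sub_nonneg]
    have hcast : ((Fintype.card ι : ℂ))⁻¹ • ((n (∑ x, u x) : ℝ) : ℂ)
        = (((L : ℝ)⁻¹ * n (∑ x, u x) : ℝ) : ℂ) := by
      push_cast [hL]
      rw [smul_eq_mul]
    rw [hcast]
    exact_mod_cast hreal
end

section
/- For discrete phases: given orthogonal projectors P_1,...,P_d summing to the identity and any operator X on the n-fold tensor power, averaging (U^φ)^{⊗n} X ((U^φ)^†)^{⊗n} over φ ranging over the finite group {2πj/(n+1) : j=0,...,n}^d of phase vectors yields the type-pinching Σ_μ P_μ^n X P_μ^n. -/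
open scoped ComplexOrder Matrix

/-- the phase unitary `∑ k, e^{i φ k} • P k` built from a projector family. -/
noncomputable def phaseUnitary {A ι : Type*} [Fintype A] [Fintype ι]
    (P : ι → Matrix A A ℂ) (φ : ι → ℝ) : Matrix A A ℂ :=
  ∑ k, Complex.exp ((φ k : ℂ) * Complex.I) • P k

/-- n-fold tensor (Kronecker) power of a matrix. -/
def tpow {A : Type*} (U : Matrix A A ℂ) (n : ℕ) :
    Matrix (Fin n → A) (Fin n → A) ℂ :=
  Matrix.of fun f g => ∏ m, U (f m) (g m)

/-- the type (multiplicity vector) of a sequence. -/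
def typeOf {ι : Type*} [Fintype ι] [DecidableEq ι] {n : ℕ} (x : Fin n → ι) : ι → ℕ :=
  fun k => (Finset.univ.filter fun m => x m = k).card

/-- the projector `P_μ^n = ∑_{x^n of type μ} ⊗_m P_{x_m}` onto a type class. -/
noncomputable def typeProj {A ι : Type*} [Fintype A] [Fintype ι] [DecidableEq ι]
    (P : ι → Matrix A A ℂ) (n : ℕ) (t : ι → ℕ) :
    Matrix (Fin n → A) (Fin n → A) ℂ :=
  ∑ x ∈ Finset.univ.filter (fun x : Fin n → ι => typeOf x = t),
    Matrix.of fun f g => ∏ m, P (x m) (f m) (g m)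

/-- the type pinching map `K ↦ ∑_μ P_μ^n K P_μ^n` on `n` systems. -/
noncomputable def typePinch {A ι : Type*} [Fintype A] [Fintype ι] [DecidableEq ι]
    (P : ι → Matrix A A ℂ) (n : ℕ)
    (K : Matrix (Fin n → A) (Fin n → A) ℂ) :
    Matrix (Fin n → A) (Fin n → A) ℂ :=
  ∑ t ∈ Finset.univ.image (typeOf (ι := ι) (n := n)),
    typeProj P n t * K * typeProj P n t

/-- elementary tensor of projectors along a word `x`. -/
noncomputable def kronP {A : Type*} [Fintype A] {d n : ℕ} (P : Fin d → Matrix A A ℂ)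
    (x : Fin n → Fin d) : Matrix (Fin n → A) (Fin n → A) ℂ :=
  Matrix.of fun f g => ∏ m, P (x m) (f m) (g m)

lemma tpow_phaseUnitary {A : Type*} [Fintype A] {d n : ℕ} (P : Fin d → Matrix A A ℂ)
    (φ : Fin d → ℝ) :
    tpow (phaseUnitary P φ) n =
      ∑ x : Fin n → Fin d, (∏ m, Complex.exp ((φ (x m) : ℂ) * Complex.I)) • kronP P x := by
  ext f g
  simp only [tpow, phaseUnitary, Matrix.of_apply, Matrix.sum_apply, Matrix.smul_apply,
    smul_eq_mul, kronP]
  rw [Finset.prod_univ_sum]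
  rw [Fintype.piFinset_univ]
  refine Finset.sum_congr rfl fun x _ => ?_
  rw [Finset.prod_mul_distrib]

lemma sum_comp_typeOf {d n : ℕ} (x : Fin n → Fin d) (f : Fin d → ℂ) :
    ∑ m, f (x m) = ∑ k, (typeOf x k : ℂ) * f k := by
  rw [← Finset.sum_fiberwise Finset.univ x (fun m => f (x m))]
  refine Finset.sum_congr rfl fun k _ => ?_
  rw [Finset.sum_congr rfl (fun m hm => by
    simp only [Finset.mem_filter] at hm; rw [hm.2])]
  simp [typeOf, mul_comm]

lemma kronP_conjTranspose {A : Type*} [Fintype A] {d n : ℕ} (P : Fin d → Matrix A A ℂ)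
    (hHerm : ∀ k, (P k).IsHermitian) (x : Fin n → Fin d) :
    (kronP P x)ᴴ = kronP P x := by
  ext f g
  simp only [Matrix.conjTranspose_apply, kronP, Matrix.of_apply, star_prod]
  exact Finset.prod_congr rfl fun m _ => (hHerm (x m)).apply (f m) (g m)

lemma typeOf_le {d n : ℕ} (x : Fin n → Fin d) (k : Fin d) : typeOf x k ≤ n := by
  simpa [typeOf] using (Finset.card_filter_le Finset.univ (fun m => x m = k))

lemma geom_phase_sum (n a b : ℕ) (ha : a ≤ n) (hb : b ≤ n) :
    ∑ j : Fin (n+1), Complex.exp (((a:ℂ) - b) * (2 * Real.pi * (j:ℝ) / (n+1) : ℝ) * Complex.I)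
      = if a = b then ((n+1 : ℕ) : ℂ) else 0 := by
  have hn : ((n:ℂ) + 1) ≠ 0 := Nat.cast_add_one_ne_zero n
  by_cases hab : a = b
  · simp [hab]
  · rw [if_neg hab]
    set ω : ℂ := Complex.exp (((a:ℂ) - b) * (2 * Real.pi / (n+1)) * Complex.I) with hω
    have hterm : ∀ j : Fin (n+1),
        Complex.exp (((a:ℂ) - b) * (2 * Real.pi * (j:ℝ) / (n+1) : ℝ) * Complex.I) = ω ^ (j:ℕ) := by
      intro j
      rw [hω, ← Complex.exp_nat_mul]
      congr 1
      push_cast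
      ring
    simp only [hterm]
    rw [Fin.sum_univ_eq_sum_range (fun i => ω ^ i)]
    have hω1 : ω ≠ 1 := by
      intro h
      rw [hω, Complex.exp_eq_one_iff] at h
      obtain ⟨m, hm⟩ := h
      have hπ : (2 * (Real.pi:ℂ) * Complex.I) ≠ 0 := by
        simp [Real.pi_ne_zero, Complex.I_ne_zero]
      have hc : ((a:ℂ) - b) = m * (n+1) := by
        have h2 : ((a:ℂ) - b) * (2 * Real.pi * Complex.I) = (m * (n+1)) * (2 * Real.pi * Complex.I) := by
          have h3 := hm
          field_simp at h3
          linear_combination (2 * (Real.pi:ℂ) * Complex.I) * h3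
        exact mul_right_cancel₀ hπ h2
      have hz : (a:ℤ) - b = m * (n+1) := by exact_mod_cast hc
      have han : (a:ℤ) ≤ n := Int.ofNat_le.mpr ha
      have hbn : (b:ℤ) ≤ n := Int.ofNat_le.mpr hb
      rcases lt_trichotomy m 0 with hm0 | hm0 | hm0
      · have : m ≤ -1 := by omega
        nlinarith
      · subst hm0; simp at hz; apply hab; omega
      · have : 1 ≤ m := by omega
        nlinarith
    have hωn : ω ^ (n+1) = 1 := by
      rw [hω, ← Complex.exp_nat_mul, Complex.exp_eq_one_iff]
      refine ⟨(a:ℤ) - b, ?_⟩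
      push_cast
      field_simp
    rw [geom_sum_eq hω1, hωn]
    simp

lemma phase_sum_key {d n : ℕ} (x y : Fin n → Fin d) :
    ∑ j : Fin d → Fin (n+1),
      (∏ m, Complex.exp (((2 * Real.pi * (j (x m) : ℝ) / (n+1) : ℝ) : ℂ) * Complex.I)) *
        star (∏ m, Complex.exp (((2 * Real.pi * (j (y m) : ℝ) / (n+1) : ℝ) : ℂ) * Complex.I))
      = if typeOf x = typeOf y then (((n+1 : ℕ) ^ d : ℕ) : ℂ) else 0 := by
  have hterm : ∀ j : Fin d → Fin (n+1),
      (∏ m, Complex.exp (((2 * Real.pi * (j (x m) : ℝ) / (n+1) : ℝ) : ℂ) * Complex.I)) *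
        star (∏ m, Complex.exp (((2 * Real.pi * (j (y m) : ℝ) / (n+1) : ℝ) : ℂ) * Complex.I))
      = ∏ k, Complex.exp (((typeOf x k : ℂ) - (typeOf y k : ℂ)) *
          ((2 * Real.pi * (j k : ℝ) / (n+1) : ℝ) : ℂ) * Complex.I) := by
    intro j
    have hstar : star (∏ m, Complex.exp (((2 * Real.pi * (j (y m) : ℝ) / (n+1) : ℝ) : ℂ) * Complex.I))
        = ∏ m, Complex.exp (-(((2 * Real.pi * (j (y m) : ℝ) / (n+1) : ℝ) : ℂ) * Complex.I)) := by
      rw [star_prod]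
      refine Finset.prod_congr rfl fun m _ => ?_
      rw [Complex.star_def, ← Complex.exp_conj]
      congr 1
      rw [map_mul, Complex.conj_ofReal, Complex.conj_I]
      ring_nf
    rw [hstar, ← Complex.exp_sum, ← Complex.exp_sum, ← Complex.exp_add, ← Complex.exp_sum]
    rw [sum_comp_typeOf x (fun k => ((2 * Real.pi * (j k : ℝ) / (n+1) : ℝ) : ℂ) * Complex.I),
        sum_comp_typeOf y (fun k => -(((2 * Real.pi * (j k : ℝ) / (n+1) : ℝ) : ℂ) * Complex.I)),
        ← Finset.sum_add_distrib]
    congr 1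
    refine Finset.sum_congr rfl fun k _ => ?_
    ring
  simp only [hterm]
  rw [show (Finset.univ : Finset (Fin d → Fin (n+1))) = Fintype.piFinset (fun _ => Finset.univ) by
    rw [Fintype.piFinset_univ],
    ← Finset.prod_univ_sum (fun _ => (Finset.univ : Finset (Fin (n+1))))
      (fun k jk => Complex.exp (((typeOf x k : ℂ) - (typeOf y k : ℂ)) *
        ((2 * Real.pi * (jk : ℝ) / (n+1) : ℝ) : ℂ) * Complex.I))]
  have hfac : ∀ k : Fin d,
      (∑ j : Fin (n+1), Complex.exp (((typeOf x k : ℂ) - (typeOf y k : ℂ)) *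
          ((2 * Real.pi * (j : ℝ) / (n+1) : ℝ) : ℂ) * Complex.I))
      = if typeOf x k = typeOf y k then ((n+1 : ℕ) : ℂ) else 0 := fun k =>
    geom_phase_sum n (typeOf x k) (typeOf y k) (typeOf_le x k) (typeOf_le y k)
  rw [Finset.prod_congr rfl fun k _ => hfac k]
  by_cases h : typeOf x = typeOf y
  · rw [if_pos h]
    rw [Finset.prod_congr rfl fun k _ => if_pos (congrFun h k)]
    simp
  · rw [if_neg h]
    obtain ⟨k, hk⟩ : ∃ k, typeOf x k ≠ typeOf y k := by
      by_contra hc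
      push_neg at hc
      exact h (funext hc)
    exact Finset.prod_eq_zero (Finset.mem_univ k) (if_neg hk)

/-- **Discrete phase averaging yields the type pinching.** For orthogonal projectors
`P_1, …, P_d` summing to the identity, averaging `(U^φ)^{⊗n} X ((U^φ)†)^{⊗n}` over the
finite group of phase vectors `φ ∈ {2πj/(n+1) : j = 0, …, n}^d` equals
`∑_μ P_μ^n X P_μ^n`. -/
theorem discrete_phase_average_eq_type_pinching
    {A : Type*} [Fintype A] [DecidableEq A] (d n : ℕ)
    (P : Fin d → Matrix A A ℂ)
    (hHerm : ∀ k, (P k).IsHermitian)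
    (horth : ∀ j k, P j * P k = if j = k then P j else 0)
    (hsum : ∑ k, P k = 1)
    (X : Matrix (Fin n → A) (Fin n → A) ℂ) :
    (((n + 1 : ℕ) ^ d : ℂ))⁻¹ •
      ∑ j : Fin d → Fin (n + 1),
        tpow (phaseUnitary P fun k => 2 * Real.pi * (j k : ℝ) / (n + 1)) n * X *
          (tpow (phaseUnitary P fun k => 2 * Real.pi * (j k : ℝ) / (n + 1)) n)ᴴ =
      typePinch P n X := by
  have hc : (((n + 1 : ℕ) : ℂ) ^ d) ≠ 0 :=
    pow_ne_zero _ (Nat.cast_ne_zero.mpr (Nat.succ_ne_zero n))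
  have expand : ∀ j : Fin d → Fin (n+1),
      tpow (phaseUnitary P fun k => 2 * Real.pi * (j k : ℝ) / (n + 1)) n * X *
        (tpow (phaseUnitary P fun k => 2 * Real.pi * (j k : ℝ) / (n + 1)) n)ᴴ
      = ∑ x : Fin n → Fin d, ∑ y : Fin n → Fin d,
          ((∏ m, Complex.exp (((2 * Real.pi * ((j (x m)) : ℝ) / (n+1) : ℝ) : ℂ) * Complex.I)) *
            star (∏ m, Complex.exp (((2 * Real.pi * ((j (y m)) : ℝ) / (n+1) : ℝ) : ℂ) * Complex.I))) •
          (kronP P x * X * kronP P y) := by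
    intro j
    rw [tpow_phaseUnitary, Matrix.conjTranspose_sum]
    simp only [Matrix.conjTranspose_smul, kronP_conjTranspose P hHerm,
      Finset.sum_mul, Finset.mul_sum, Matrix.smul_mul, Matrix.mul_smul, smul_smul]
    rw [Finset.sum_comm]
    refine Finset.sum_congr rfl fun x _ => Finset.sum_congr rfl fun y _ => ?_
    rw [mul_comm]
  simp only [expand]
  rw [show (∑ j : Fin d → Fin (n+1), ∑ x : Fin n → Fin d, ∑ y : Fin n → Fin d,
      ((∏ m, Complex.exp (((2 * Real.pi * ((j (x m)) : ℝ) / (n+1) : ℝ) : ℂ) * Complex.I)) *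
        star (∏ m, Complex.exp (((2 * Real.pi * ((j (y m)) : ℝ) / (n+1) : ℝ) : ℂ) * Complex.I))) •
      (kronP P x * X * kronP P y))
    = ∑ x : Fin n → Fin d, ∑ y : Fin n → Fin d, ∑ j : Fin d → Fin (n+1),
      ((∏ m, Complex.exp (((2 * Real.pi * ((j (x m)) : ℝ) / (n+1) : ℝ) : ℂ) * Complex.I)) *
        star (∏ m, Complex.exp (((2 * Real.pi * ((j (y m)) : ℝ) / (n+1) : ℝ) : ℂ) * Complex.I))) •
      (kronP P x * X * kronP P y) by
    rw [Finset.sum_comm]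
    exact Finset.sum_congr rfl fun x _ => Finset.sum_comm]
  simp only [← Finset.sum_smul, phase_sum_key]
  have hval : ∀ x y : Fin n → Fin d,
      (if typeOf x = typeOf y then (((n+1 : ℕ) ^ d : ℕ) : ℂ) else 0) • (kronP P x * X * kronP P y)
      = (((n + 1 : ℕ) : ℂ) ^ d) •
          (if typeOf x = typeOf y then kronP P x * X * kronP P y else 0) := by
    intro x y
    split
    · rw [Nat.cast_pow]
    · simp
  simp only [hval, ← Finset.smul_sum, smul_smul]
  rw [inv_mul_cancel₀ hc, one_smul]
  -- now regroup by type
  have hmaps : ∀ x ∈ (Finset.univ : Finset (Fin n → Fin d)),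
      typeOf x ∈ Finset.univ.image (typeOf (ι := Fin d) (n := n)) :=
    fun x _ => Finset.mem_image_of_mem _ (Finset.mem_univ x)
  rw [← Finset.sum_fiberwise_of_maps_to hmaps
    (fun x => ∑ y : Fin n → Fin d,
      if typeOf x = typeOf y then kronP P x * X * kronP P y else 0)]
  unfold typePinch typeProj
  refine Finset.sum_congr rfl fun t ht => ?_
  have hproj : (∑ x ∈ Finset.univ.filter (fun x : Fin n → Fin d => typeOf x = t),
      (Matrix.of fun f g => ∏ m, P (x m) (f m) (g m) : Matrix (Fin n → A) (Fin n → A) ℂ))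
      = ∑ x ∈ Finset.univ.filter (fun x : Fin n → Fin d => typeOf x = t), kronP P x := rfl
  rw [hproj, Finset.sum_mul, Finset.sum_mul]
  refine Finset.sum_congr rfl fun x hx => ?_
  rw [Finset.mem_filter] at hx
  rw [Finset.mul_sum]
  rw [Finset.sum_filter]
  refine Finset.sum_congr rfl fun y _ => ?_
  by_cases hy : typeOf y = t
  · rw [if_pos hy, if_pos (hx.2.trans hy.symm)]
  · rw [if_neg hy, if_neg (fun hcon => hy (hcon.symm.trans hx.2))]
end

section
/- The measured relative entropy satisfies data processing: for any density operators ρ, σ with supp(ρ) ⊆ supp(σ) and any trace-preserving positive linear map N, D_M(N(ρ)‖N(σ)) ≤ D_M(ρ‖σ), where D_M is defined via the variational formula D_M(ρ‖σ) = sup_{ω>0}[tr(ρ log ω) − log tr(σω)]. -/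
open scoped ComplexOrder

/-- matrix logarithm of a Hermitian matrix (junk value `0` otherwise). -/
noncomputable def mlog {n : Type*} [Fintype n] [DecidableEq n]
    (A : Matrix n n ℂ) : Matrix n n ℂ :=
  if h : A.IsHermitian then h.cfc Real.log else 0

/-- measured relative entropy, via the variational formula
`D_M(ρ‖σ) = sup_{ω > 0} [tr(ρ log ω) − log tr(σω)]`. -/
noncomputable def DMvar {n : Type*} [Fintype n] [DecidableEq n]
    (ρ σ : Matrix n n ℂ) : ℝ :=
  ⨆ ω : {ω : Matrix n n ℂ // ω.PosDef},
    ((ρ * mlog ω.1).trace).re - Real.log ((σ * ω.1).trace).re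

set_option maxHeartbeats 1000000

open Finset
open scoped Matrix

section scalar
open MeasureTheory Set Filter Topology Finset



lemma aux_tendsto (x : ℝ) (hx : 0 < x) :
    Tendsto (fun t : ℝ => Real.log (1 + t) - Real.log (x + t)) atTop (nhds 0) := by
  have h0 : Tendsto (fun t : ℝ => (1 - x) / (x + t)) atTop (nhds 0) := by
    apply Tendsto.div_atTop tendsto_const_nhds
    exact tendsto_atTop_add_const_left _ x tendsto_id
  have h1 : Tendsto (fun t : ℝ => (1 + t) / (x + t)) atTop (nhds 1) := by
    have he : ∀ᶠ t : ℝ in atTop, 1 + (1 - x) / (x + t) = (1 + t) / (x + t) := by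
      filter_upwards [eventually_gt_atTop 0] with t ht
      have hxt : x + t ≠ 0 := by positivity
      field_simp
      ring
    have := (tendsto_const_nhds (x := (1:ℝ)) (f := atTop)).add h0
    rw [add_zero] at this
    exact Tendsto.congr' he this
  have h2 : Tendsto (fun t : ℝ => Real.log ((1 + t) / (x + t))) atTop (nhds (Real.log 1)) :=
    (Real.continuousAt_log one_ne_zero).tendsto.comp h1
  rw [Real.log_one] at h2
  apply Tendsto.congr' _ h2
  filter_upwards [eventually_gt_atTop 0] with t ht
  rw [Real.log_div (by positivity) (by positivity)]

lemma aux_deriv (x : ℝ) (hx : 0 < x) (t : ℝ) (ht : t ∈ Ici (0:ℝ)) :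
    HasDerivAt (fun t : ℝ => Real.log (1 + t) - Real.log (x + t))
      ((1 + t)⁻¹ - (x + t)⁻¹) t := by
  have ht0 : (0:ℝ) ≤ t := ht
  have h1 : HasDerivAt (fun t : ℝ => Real.log (1 + t)) (1 / (1 + t)) t := by
    have : HasDerivAt (fun t : ℝ => 1 + t) 1 t := (hasDerivAt_id t).const_add 1
    exact ((Real.hasDerivAt_log (by positivity)).comp t this).congr_deriv (by simp)
  have h2 : HasDerivAt (fun t : ℝ => Real.log (x + t)) (1 / (x + t)) t := by
    have : HasDerivAt (fun t : ℝ => x + t) 1 t := (hasDerivAt_id t).const_add x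
    exact ((Real.hasDerivAt_log (by positivity)).comp t this).congr_deriv (by simp)
  exact (h1.sub h2).congr_deriv (by simp [one_div])

/-- `log x = ∫₀^∞ (1/(1+t) - 1/(x+t)) dt`, with integrability. -/
lemma log_integral (x : ℝ) (hx : 0 < x) :
    IntegrableOn (fun t : ℝ => (1 + t)⁻¹ - (x + t)⁻¹) (Ioi 0) ∧
      ∫ t in Ioi (0:ℝ), ((1 + t)⁻¹ - (x + t)⁻¹) = Real.log x := by
  have hf0 : (fun t : ℝ => Real.log (1 + t) - Real.log (x + t)) 0 = - Real.log x := by simp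
  rcases le_total 1 x with hx1 | hx1
  · have hpos : ∀ t ∈ Ioi (0:ℝ), 0 ≤ (1 + t)⁻¹ - (x + t)⁻¹ := by
      intro t ht
      have : (0:ℝ) < t := ht
      have : (0:ℝ) < 1 + t := by linarith
      have : (x + t)⁻¹ ≤ (1 + t)⁻¹ := by
        apply inv_anti₀ (by linarith) (by linarith)
      linarith
    refine ⟨integrableOn_Ioi_deriv_of_nonneg' (aux_deriv x hx) hpos (aux_tendsto x hx), ?_⟩
    rw [integral_Ioi_of_hasDerivAt_of_nonneg' (aux_deriv x hx) hpos (aux_tendsto x hx)]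
    simp
  · have hneg : ∀ t ∈ Ioi (0:ℝ), (1 + t)⁻¹ - (x + t)⁻¹ ≤ 0 := by
      intro t ht
      have : (0:ℝ) < t := ht
      have : (0:ℝ) < x + t := by linarith
      have : (1 + t)⁻¹ ≤ (x + t)⁻¹ := by
        apply inv_anti₀ (by linarith) (by linarith)
      linarith
    refine ⟨integrableOn_Ioi_deriv_of_nonpos' (aux_deriv x hx) hneg (aux_tendsto x hx), ?_⟩
    rw [integral_Ioi_of_hasDerivAt_of_nonpos' (aux_deriv x hx) hneg (aux_tendsto x hx)]
    simp

/-- key scalar lemma: from resolvent domination to log domination. -/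
lemma scalar_log_le {ι κ : Type*} [Fintype ι] [Fintype κ]
    (a : ι → ℝ) (r : κ → ℝ) (lam : ι → ℝ) (mu : κ → ℝ)
    (ha : ∀ k, 0 ≤ a k) (hr : ∀ j, 0 ≤ r j) (hlam : ∀ k, 0 < lam k) (hmu : ∀ j, 0 < mu j)
    (hsum : ∑ k, a k = ∑ j, r j)
    (hres : ∀ t : ℝ, 0 < t → ∑ j, r j / (mu j + t) ≤ ∑ k, a k / (lam k + t)) :
    ∑ k, a k * Real.log (lam k) ≤ ∑ j, r j * Real.log (mu j) := by
  -- express as integrals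
  have hIa : ∀ k : ι, IntegrableOn (fun t : ℝ => a k * ((1 + t)⁻¹ - (lam k + t)⁻¹)) (Ioi 0) :=
    fun k => ((log_integral (lam k) (hlam k)).1.smul (a k) : _)
  have hIr : ∀ j : κ, IntegrableOn (fun t : ℝ => r j * ((1 + t)⁻¹ - (mu j + t)⁻¹)) (Ioi 0) :=
    fun j => ((log_integral (mu j) (hmu j)).1.smul (r j) : _)
  have hA : ∑ k, a k * Real.log (lam k)
      = ∫ t in Ioi (0:ℝ), ∑ k, a k * ((1 + t)⁻¹ - (lam k + t)⁻¹) := by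
    rw [integral_finset_sum univ (fun k _ => hIa k)]
    refine Finset.sum_congr rfl fun k _ => ?_
    rw [integral_const_mul, (log_integral (lam k) (hlam k)).2]
  have hR : ∑ j, r j * Real.log (mu j)
      = ∫ t in Ioi (0:ℝ), ∑ j, r j * ((1 + t)⁻¹ - (mu j + t)⁻¹) := by
    rw [integral_finset_sum univ (fun j _ => hIr j)]
    refine Finset.sum_congr rfl fun j _ => ?_
    rw [integral_const_mul, (log_integral (mu j) (hmu j)).2]
  rw [hA, hR]
  apply setIntegral_mono_on (integrable_finset_sum univ (fun k _ => hIa k))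
    (integrable_finset_sum univ (fun j _ => hIr j)) measurableSet_Ioi
  intro t ht
  have ht : (0:ℝ) < t := ht
  have expand : ∀ (c x : ℝ), c * ((1 + t)⁻¹ - (x + t)⁻¹) = c * (1+t)⁻¹ - c / (x + t) := by
    intro c x; rw [div_eq_mul_inv]; ring
  simp only [expand, Finset.sum_sub_distrib, ← Finset.sum_mul]
  rw [hsum]
  have := hres t ht
  linarith

end scalar

section scalar2
open Set Finset


/-- scalar boundedness lemma via Jensen. -/
lemma scalar_bdd {ι : Type*} [Fintype ι] (p q lam : ι → ℝ) (c : ℝ) (hc : 0 < c)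
    (hp : ∀ i, 0 ≤ p i) (hq : ∀ i, 0 ≤ q i) (hlam : ∀ i, 0 < lam i)
    (hpc : ∀ i, p i ≤ c * q i) (hp1 : ∑ i, p i = 1) :
    ∑ i, p i * Real.log (lam i) ≤ Real.log c + Real.log (∑ i, q i * lam i) := by
  classical
  set s : Finset ι := univ.filter (fun i => p i ≠ 0) with hs
  have hps : ∑ i ∈ s, p i = 1 := by rw [hs, Finset.sum_filter_ne_zero]; exact hp1
  have hppos : ∀ i ∈ s, 0 < p i := fun i hi =>
    lt_of_le_of_ne (hp i) (Ne.symm (by simpa [hs] using hi))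
  have hqpos : ∀ i ∈ s, 0 < q i := by
    intro i hi
    by_contra h
    have hq0 : q i = 0 := le_antisymm (not_lt.mp h) (hq i)
    have := hpc i
    rw [hq0, mul_zero] at this
    exact absurd (le_antisymm this (hp i)) (by simpa [hs] using hi)
  have hsne : s.Nonempty := by
    by_contra h
    rw [Finset.not_nonempty_iff_eq_empty] at h
    rw [h, Finset.sum_empty] at hps
    norm_num at hps
  set x : ι → ℝ := fun i => c * q i * lam i / p i with hxdef
  have hxpos : ∀ i ∈ s, 0 < x i := fun i hi => by
    have := hppos i hi; have := hqpos i hi; have := hlam i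
    positivity
  -- Jensen
  have jensen := (strictConcaveOn_log_Ioi.concaveOn).le_map_sum
    (t := s) (w := p) (p := x) (fun i hi => (hppos i hi).le) hps
    (fun i hi => hxpos i hi)
  have hsx : ∑ i ∈ s, p i • x i = c * ∑ i ∈ s, q i * lam i := by
    rw [Finset.mul_sum]
    refine Finset.sum_congr rfl fun i hi => ?_
    have hpne : p i ≠ 0 := (hppos i hi).ne'
    field_simp [hxdef]
    rw [hxdef]; show p i * (c * q i * lam i / p i) = _; field_simp
  set Ts := ∑ i ∈ s, q i * lam i with hTs
  have hTspos : 0 < Ts := by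
    apply Finset.sum_pos (fun i hi => mul_pos (hqpos i hi) (hlam i)) hsne
  have hTsT : Ts ≤ ∑ i, q i * lam i := by
    apply Finset.sum_le_sum_of_subset_of_nonneg (Finset.subset_univ s)
    intro i _ _
    exact mul_nonneg (hq i) (hlam i).le
  have hTpos : 0 < ∑ i, q i * lam i := lt_of_lt_of_le hTspos hTsT
  -- per-term decomposition
  have hterm : ∀ i ∈ s, p i * Real.log (lam i) ≤ p i * Real.log (x i) := by
    intro i hi
    have hpi := hppos i hi; have hqi := hqpos i hi; have hli := hlam i
    have hxval : Real.log (x i) = Real.log c + Real.log (q i) + Real.log (lam i)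
        - Real.log (p i) := by
      rw [hxdef]
      rw [Real.log_div (by positivity) hpi.ne', Real.log_mul (by positivity) hli.ne',
        Real.log_mul hc.ne' hqi.ne']
    rw [hxval]
    have hlog : Real.log (p i) ≤ Real.log c + Real.log (q i) := by
      rw [← Real.log_mul hc.ne' hqi.ne']
      exact Real.log_le_log hpi (hpc i)
    nlinarith [hppos i hi]
  have step1 : ∑ i, p i * Real.log (lam i) = ∑ i ∈ s, p i * Real.log (lam i) := by
    symm
    apply Finset.sum_subset (Finset.subset_univ s)
    intro i _ hi
    have : p i = 0 := by by_contra h; exact hi (by simp [hs, h])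
    simp [this]
  calc ∑ i, p i * Real.log (lam i) = ∑ i ∈ s, p i * Real.log (lam i) := step1
    _ ≤ ∑ i ∈ s, p i * Real.log (x i) := Finset.sum_le_sum hterm
    _ ≤ Real.log (∑ i ∈ s, p i • x i) := by simpa [smul_eq_mul] using jensen
    _ ≤ Real.log c + Real.log (∑ i, q i * lam i) := by
        rw [hsx, ← Real.log_mul hc.ne' hTpos.ne']
        exact Real.log_le_log (by positivity) (by nlinarith)

end scalar2

namespace DPIaux
variable {n : Type*} [Fintype n] [DecidableEq n]

lemma stdBasis_conjTranspose (k : n) :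
    (Matrix.single k k (1:ℂ))ᴴ = Matrix.single k k 1 := by
  ext i j
  simp [Matrix.conjTranspose_apply, Matrix.single, and_comm]

lemma stdBasis_mul_stdBasis (j k : n) :
    Matrix.single j j (1:ℂ) * Matrix.single k k 1 =
      if j = k then Matrix.single j j 1 else 0 := by
  by_cases h : j = k
  · subst h
    simp
  · simp [Matrix.single_mul_single_of_ne, h]

lemma sum_stdBasis : ∑ k : n, Matrix.single k k (1:ℂ) = 1 := by
  ext i j
  simp only [Matrix.sum_apply, Matrix.single, Matrix.one_apply, Matrix.of_apply]
  rw [Finset.sum_eq_single i]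
  · simp
  · intro b _ hb
    simp [hb]
  · simp

lemma stdBasis_conjTranspose' (i j : n) :
    (Matrix.single i j (1:ℂ))ᴴ = Matrix.single j i 1 := by
  ext a b
  simp [Matrix.conjTranspose_apply, Matrix.single, and_comm]

lemma trace_stdBasisMatrix_mul (i j : n) (M : Matrix n n ℂ) :
    (Matrix.single i j (1:ℂ) * M).trace = M j i := by
  simp only [Matrix.trace, Matrix.diag]
  rw [Finset.sum_eq_single i]
  · rw [Matrix.single_mul_apply_same, one_mul]
  · intro b _ hb
    simp [Matrix.single_mul_apply_of_ne, hb]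
  · simp

/-- spectral projection onto the k-th eigenvector. -/
noncomputable def sproj {H : Matrix n n ℂ} (hH : H.IsHermitian) (k : n) : Matrix n n ℂ :=
  (hH.eigenvectorUnitary : Matrix n n ℂ) * Matrix.single k k 1 *
    star (hH.eigenvectorUnitary : Matrix n n ℂ)

variable {H : Matrix n n ℂ} (hH : H.IsHermitian)

lemma sproj_posSemidef (k : n) : (sproj hH k).PosSemidef := by
  have h : sproj hH k = ((hH.eigenvectorUnitary : Matrix n n ℂ) * Matrix.single k k 1) *
      ((hH.eigenvectorUnitary : Matrix n n ℂ) * Matrix.single k k 1)ᴴ := by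
    rw [Matrix.conjTranspose_mul, stdBasis_conjTranspose, sproj, Matrix.mul_assoc,
      Matrix.mul_assoc, ← Matrix.mul_assoc (Matrix.single k k 1),
      Matrix.single_mul_single_same, mul_one, Matrix.star_eq_conjTranspose]
  rw [h]
  exact Matrix.posSemidef_self_mul_conjTranspose _

lemma sum_sproj : ∑ k, sproj hH k = 1 := by
  have hU : (hH.eigenvectorUnitary : Matrix n n ℂ) * star (hH.eigenvectorUnitary : Matrix n n ℂ)
      = 1 := Matrix.mem_unitaryGroup_iff.mp hH.eigenvectorUnitary.2
  simp only [sproj]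
  rw [← Finset.sum_mul, ← Finset.mul_sum, sum_stdBasis, Matrix.mul_one, hU]

lemma sproj_mul_sproj (j k : n) :
    sproj hH j * sproj hH k = if j = k then sproj hH j else 0 := by
  have hU : star (hH.eigenvectorUnitary : Matrix n n ℂ) * (hH.eigenvectorUnitary : Matrix n n ℂ)
      = 1 := Matrix.mem_unitaryGroup_iff'.mp hH.eigenvectorUnitary.2
  simp only [sproj]
  rw [Matrix.mul_assoc, Matrix.mul_assoc, ← Matrix.mul_assoc (star _), ← Matrix.mul_assoc (star _),
    hU, Matrix.one_mul, ← Matrix.mul_assoc, ← Matrix.mul_assoc,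
    Matrix.mul_assoc _ (Matrix.single j j 1), stdBasis_mul_stdBasis]
  by_cases h : j = k
  · simp [h, Matrix.mul_assoc]
  · simp [h]

lemma diagonal_eq_sum (d : n → ℂ) :
    Matrix.diagonal d = ∑ k, d k • Matrix.single k k (1:ℂ) := by
  ext i j
  simp only [Matrix.sum_apply, Matrix.smul_apply, Matrix.single, Matrix.diagonal,
    Matrix.of_apply, smul_eq_mul]
  rw [Finset.sum_eq_single i]
  · by_cases h : i = j <;> simp [h]
  · intro b _ hb
    simp [hb]
  · simp

lemma cfc_eq_sum (f : ℝ → ℝ) :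
    hH.cfc f = ∑ k, (f (hH.eigenvalues k) : ℂ) • sproj hH k := by
  rw [Matrix.IsHermitian.cfc, Unitary.conjStarAlgAut_apply, diagonal_eq_sum, Finset.mul_sum, Finset.sum_mul]
  refine Finset.sum_congr rfl fun k _ => ?_
  simp only [Function.comp_apply, Matrix.mul_smul, Matrix.smul_mul, sproj]
  rfl

lemma matrix_eq_sum : H = ∑ k, (hH.eigenvalues k : ℂ) • sproj hH k := by
  have h := cfc_eq_sum hH id
  simp only [id] at h
  rw [← h, Matrix.IsHermitian.cfc]
  conv_lhs => rw [hH.spectral_theorem]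
  rfl

lemma trace_stdBasis_mul (M : Matrix n n ℂ) (k : n) :
    (M * Matrix.single k k 1).trace = M k k := by
  simp only [Matrix.trace, Matrix.diag, Matrix.mul_apply, Matrix.single, Matrix.of_apply]
  rw [Finset.sum_eq_single k]
  · rw [Finset.sum_eq_single k]
    · simp
    · intro b _ hb
      simp [Ne.symm hb]
    · simp
  · intro b _ hb
    apply Finset.sum_eq_zero
    intro x _
    simp [Ne.symm hb]
  · simp

lemma trace_mul_sproj (M : Matrix n n ℂ) (k : n) :
    (M * sproj hH k).trace =
      (star (hH.eigenvectorUnitary : Matrix n n ℂ) * M * (hH.eigenvectorUnitary : Matrix n n ℂ))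
        k k := by
  rw [sproj, ← Matrix.mul_assoc, ← Matrix.mul_assoc, Matrix.trace_mul_cycle, ← Matrix.mul_assoc,
    trace_stdBasis_mul]

lemma trace_sproj (k : n) : (sproj hH k).trace = 1 := by
  rw [← Matrix.one_mul (sproj hH k), trace_mul_sproj]
  have hU : star (hH.eigenvectorUnitary : Matrix n n ℂ) * (hH.eigenvectorUnitary : Matrix n n ℂ)
      = 1 := Matrix.mem_unitaryGroup_iff'.mp hH.eigenvectorUnitary.2
  rw [Matrix.mul_one, hU, Matrix.one_apply_eq]


lemma star_col_ne_zero (k : n) : (fun i => (hH.eigenvectorUnitary : Matrix n n ℂ) i k) ≠ 0 := by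
  intro h
  have hU : star (hH.eigenvectorUnitary : Matrix n n ℂ) * (hH.eigenvectorUnitary : Matrix n n ℂ)
      = 1 := Matrix.mem_unitaryGroup_iff'.mp hH.eigenvectorUnitary.2
  have h1 : (star (hH.eigenvectorUnitary : Matrix n n ℂ) *
      (hH.eigenvectorUnitary : Matrix n n ℂ)) k k = 1 := by rw [hU, Matrix.one_apply_eq]
  rw [Matrix.mul_apply] at h1
  have h0 : ∀ i, (hH.eigenvectorUnitary : Matrix n n ℂ) i k = 0 := fun i => congrFun h i
  simp only [Matrix.star_apply, h0, mul_zero, Finset.sum_const_zero] at h1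
  exact one_ne_zero h1.symm

lemma quad_form_eq (X : Matrix n n ℂ) (U : Matrix n n ℂ) (k : n) :
    (star U * X * U) k k =
      dotProduct (star (fun i => U i k)) (X.mulVec (fun i => U i k)) := by
  simp only [Matrix.mul_apply, Matrix.mulVec, dotProduct, Matrix.star_apply,
    Pi.star_apply, Finset.sum_mul, Finset.mul_sum]
  rw [Finset.sum_comm]
  refine Finset.sum_congr rfl fun i _ => Finset.sum_congr rfl fun j _ => ?_
  ring

lemma trace_mul_sproj_nonneg {X : Matrix n n ℂ} (hX : X.PosSemidef) (k : n) :
    0 ≤ (X * sproj hH k).trace := by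
  rw [trace_mul_sproj, quad_form_eq]
  exact hX.dotProduct_mulVec_nonneg _

lemma trace_mul_sproj_pos {X : Matrix n n ℂ} (hX : X.PosDef) (k : n) :
    0 < (X * sproj hH k).trace := by
  rw [trace_mul_sproj, quad_form_eq]
  exact hX.dotProduct_mulVec_pos (star_col_ne_zero hH k)

lemma trace_mul_repr (Z : Matrix n n ℂ) {ι : Type*} [Fintype ι] (c : ι → ℂ)
    (P : ι → Matrix n n ℂ) :
    (Z * ∑ k, c k • P k).trace = ∑ k, c k * (Z * P k).trace := by
  rw [Finset.mul_sum, Matrix.trace_sum]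
  refine Finset.sum_congr rfl fun k _ => ?_
  rw [Matrix.mul_smul, Matrix.trace_smul, smul_eq_mul]

lemma trace_eq_sum_eig {Y : Matrix n n ℂ} (hY : Y.IsHermitian) :
    Y.trace = ∑ m, (hY.eigenvalues m : ℂ) := by
  conv_lhs => rw [matrix_eq_sum hY]
  rw [Matrix.trace_sum]
  refine Finset.sum_congr rfl fun m _ => ?_
  rw [Matrix.trace_smul, trace_sproj, smul_eq_mul, mul_one]

lemma trace_mul_posSemidef {X Y : Matrix n n ℂ} (hX : X.PosSemidef) (hY : Y.PosSemidef) :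
    0 ≤ (X * Y).trace := by
  have h : (X * Y).trace = ∑ m, (hY.1.eigenvalues m : ℂ) * (X * sproj hY.1 m).trace := by
    conv_lhs => rw [matrix_eq_sum hY.1]
    exact trace_mul_repr X _ _
  rw [h]
  refine Finset.sum_nonneg fun m _ => mul_nonneg ?_ (trace_mul_sproj_nonneg hY.1 hX m)
  exact_mod_cast Complex.zero_le_real.mpr (hY.eigenvalues_nonneg m)

lemma trace_mul_posDef {X Y : Matrix n n ℂ} (hX : X.PosDef) (hY : Y.PosSemidef)
    (htr : Y.trace ≠ 0) : 0 < (X * Y).trace := by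
  have h : (X * Y).trace = ∑ m, (hY.1.eigenvalues m : ℂ) * (X * sproj hY.1 m).trace := by
    conv_lhs => rw [matrix_eq_sum hY.1]
    exact trace_mul_repr X _ _
  rw [h]
  have hex : ∃ m ∈ Finset.univ, (0:ℂ) < (hY.1.eigenvalues m : ℂ) * (X * sproj hY.1 m).trace := by
    have : ∃ m, hY.1.eigenvalues m ≠ 0 := by
      by_contra hc
      push_neg at hc
      apply htr
      rw [trace_eq_sum_eig hY.1]
      simp [hc]
    obtain ⟨m, hm⟩ := this
    have hegt : (0:ℝ) < hY.1.eigenvalues m := lt_of_le_of_ne (hY.eigenvalues_nonneg m) (Ne.symm hm)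
    exact ⟨m, Finset.mem_univ m, mul_pos (by exact_mod_cast Complex.zero_lt_real.mpr hegt)
      (trace_mul_sproj_pos hY.1 hX m)⟩
  refine Finset.sum_pos' (fun m _ => mul_nonneg ?_
    (trace_mul_sproj_nonneg hY.1 hX.posSemidef m)) hex
  exact_mod_cast Complex.zero_le_real.mpr (hY.eigenvalues_nonneg m)

open scoped MatrixOrder in
lemma choi {ι : Type*} [Fintype ι] (c : ι → ℝ) (hc : ∀ k, 0 < c k)
    (Am : ι → Matrix n n ℂ) (hA : ∀ k, (Am k).PosSemidef)
    (hAsum : ∑ k, Am k = 1) (W : Matrix n n ℂ) (hW : Wᴴ = W)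
    (hWS : W * (∑ k, ((c k : ℝ) : ℂ) • Am k) = 1) :
    (∑ k, (((c k)⁻¹ : ℝ) : ℂ) • Am k - W).PosSemidef := by
  classical
  set Bk : ι → Matrix n n ℂ := fun k => CFC.sqrt (Am k) with hBk
  have hBherm : ∀ k, (Bk k)ᴴ = Bk k := fun k => (Matrix.nonneg_iff_posSemidef.mp (CFC.sqrt_nonneg (Am k))).1
  have hBB : ∀ k, Bk k * Bk k = Am k := fun k => CFC.sqrt_mul_sqrt_self (Am k) (Matrix.nonneg_iff_posSemidef.mpr (hA k))
  set Mk : ι → Matrix n n ℂ := fun k =>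
    (((Real.sqrt (c k))⁻¹ : ℝ) : ℂ) • Bk k - ((Real.sqrt (c k) : ℝ) : ℂ) • (W * Bk k) with hMk
  have hsq : ∀ k, Real.sqrt (c k) * Real.sqrt (c k) = c k :=
    fun k => Real.mul_self_sqrt (hc k).le
  have hsqpos : ∀ k, 0 < Real.sqrt (c k) := fun k => Real.sqrt_pos.mpr (hc k)
  have hMkconj : ∀ k, (Mk k)ᴴ =
      (((Real.sqrt (c k))⁻¹ : ℝ) : ℂ) • Bk k - ((Real.sqrt (c k) : ℝ) : ℂ) • (Bk k * W) := by
    intro k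
    rw [hMk]
    simp only [Matrix.conjTranspose_sub, Matrix.conjTranspose_smul, Matrix.conjTranspose_mul,
      hBherm, hW, Complex.star_def, Complex.conj_ofReal]
  have hkey : ∀ k, Mk k * (Mk k)ᴴ =
      (((c k)⁻¹ : ℝ) : ℂ) • Am k - Am k * W - W * Am k + ((c k : ℝ) : ℂ) • (W * Am k * W) := by
    intro k
    rw [hMkconj, hMk]
    rw [Matrix.sub_mul, Matrix.mul_sub, Matrix.mul_sub]
    simp only [Matrix.smul_mul, Matrix.mul_smul, smul_smul]
    rw [← Complex.ofReal_mul, ← Complex.ofReal_mul, ← Complex.ofReal_mul, ← Complex.ofReal_mul]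
    rw [← mul_inv, hsq, inv_mul_cancel₀ (hsqpos k).ne', mul_inv_cancel₀ (hsqpos k).ne']
    have e1 : Bk k * (Bk k * W) = Am k * W := by rw [← Matrix.mul_assoc, hBB]
    have e2 : W * Bk k * Bk k = W * Am k := by rw [Matrix.mul_assoc, hBB]
    have e3 : W * Bk k * (Bk k * W) = W * Am k * W := by
      rw [Matrix.mul_assoc, ← Matrix.mul_assoc (Bk k), hBB, ← Matrix.mul_assoc]
    rw [e1, e2, e3, hBB]
    push_cast
    simp only [one_smul]
    abel
  have hsum : ∑ k, Mk k * (Mk k)ᴴ = ∑ k, (((c k)⁻¹ : ℝ) : ℂ) • Am k - W := by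
    rw [Finset.sum_congr rfl (fun k _ => hkey k)]
    simp only [Finset.sum_add_distrib, Finset.sum_sub_distrib]
    rw [← Finset.sum_mul, hAsum, Matrix.one_mul, ← Finset.mul_sum, hAsum, Matrix.mul_one]
    have e4 : ∑ k, ((c k : ℝ) : ℂ) • (W * Am k * W) = W * (∑ k, ((c k : ℝ) : ℂ) • Am k) * W := by
      rw [Finset.mul_sum, Finset.sum_mul]
      refine Finset.sum_congr rfl fun k _ => ?_
      rw [Matrix.mul_smul, Matrix.smul_mul]
    rw [e4, hWS, Matrix.one_mul]
    abel
  rw [← hsum]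
  apply Finset.sum_induction _ _ (fun a b ha hb => ha.add hb) Matrix.PosSemidef.zero
  intro k _
  exact Matrix.posSemidef_self_mul_conjTranspose _

lemma ofReal_mul_re (r : ℝ) (z : ℂ) : ((r:ℂ) * z).re = r * z.re := by
  simp [Complex.mul_re]

lemma mul_sproj (j : n) : H * sproj hH j = (hH.eigenvalues j : ℂ) • sproj hH j := by
  have h0 := congrArg (fun M => M * sproj hH j) (matrix_eq_sum hH)
  rw [h0, Finset.sum_mul]
  have h : ∀ l, ((hH.eigenvalues l : ℂ) • sproj hH l) * sproj hH j
      = if l = j then (hH.eigenvalues l : ℂ) • sproj hH l else 0 := by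
    intro l
    by_cases hl : l = j
    · subst hl
      simp [Matrix.smul_mul, sproj_mul_sproj]
    · simp [Matrix.smul_mul, sproj_mul_sproj, hl]
  rw [Finset.sum_congr rfl fun l _ => h l, Finset.sum_ite_eq' Finset.univ j _]
  simp

lemma re_nonneg_of {z : ℂ} (h : (0:ℂ) ≤ z) : 0 ≤ z.re := by
  have := (Complex.le_def.mp h).1
  simpa using this

/-- real part of trace against a cfc. -/
lemma retr_cfc (Z : Matrix n n ℂ) (f : ℝ → ℝ) :
    ((Z * hH.cfc f).trace).re = ∑ k, f (hH.eigenvalues k) * ((Z * sproj hH k).trace).re := by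
  rw [cfc_eq_sum hH f, trace_mul_repr, Complex.re_sum]
  exact Finset.sum_congr rfl fun k _ => ofReal_mul_re _ _

lemma retr_self (Z : Matrix n n ℂ) :
    ((Z * H).trace).re = ∑ k, hH.eigenvalues k * ((Z * sproj hH k).trace).re := by
  conv_lhs => rw [matrix_eq_sum hH]
  rw [trace_mul_repr, Complex.re_sum]
  exact Finset.sum_congr rfl fun k _ => ofReal_mul_re _ _

lemma sum_trace_mul_sproj (Z : Matrix n n ℂ) :
    ∑ k, (Z * sproj hH k).trace = Z.trace := by
  rw [← Matrix.trace_sum]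
  rw [← Finset.mul_sum, sum_sproj, Matrix.mul_one]

lemma posSemidef_smul_real {X : Matrix n n ℂ} (hX : X.PosSemidef) {c : ℝ} (hc : 0 ≤ c) :
    ((c : ℂ) • X).PosSemidef := by
  rw [Matrix.posSemidef_iff_dotProduct_mulVec]
  constructor
  · rw [Matrix.IsHermitian, Matrix.conjTranspose_smul, hX.1.eq]
    rw [Complex.star_def, Complex.conj_ofReal]
  · intro x
    rw [Matrix.smul_mulVec, dotProduct_smul]
    exact smul_nonneg (Complex.zero_le_real.mpr hc) (hX.dotProduct_mulVec_nonneg x)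

lemma posSemidef_sum_smul {ι : Type*} [Fintype ι] {c : ι → ℝ} (hc : ∀ k, 0 ≤ c k)
    {P : ι → Matrix n n ℂ} (hP : ∀ k, (P k).PosSemidef) :
    (∑ k, (c k : ℂ) • P k).PosSemidef := by
  apply Finset.sum_induction _ _ (fun a b ha hb => ha.add hb) Matrix.PosSemidef.zero
  intro k _
  exact posSemidef_smul_real (hP k) (hc k)

lemma sproj_conjTranspose (k : n) : (sproj hH k)ᴴ = sproj hH k :=
  (sproj_posSemidef hH k).1

lemma sum_smul_sproj_mul (f g : n → ℂ) :
    (∑ j, f j • sproj hH j) * (∑ l, g l • sproj hH l) = ∑ j, (f j * g j) • sproj hH j := by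
  rw [Finset.sum_mul]
  refine Finset.sum_congr rfl fun j _ => ?_
  rw [Matrix.smul_mul, Finset.mul_sum]
  have : ∀ l, sproj hH j * g l • sproj hH l = g l • (if j = l then sproj hH j else 0) := by
    intro l
    rw [Matrix.mul_smul, sproj_mul_sproj]
  rw [Finset.sum_congr rfl fun l _ => this l]
  simp [smul_ite, Finset.sum_ite_eq, smul_smul, mul_comm]

lemma vecMulVec_posSemidef (x : n → ℂ) : (Matrix.vecMulVec x (star x)).PosSemidef := by
  rw [Matrix.posSemidef_iff_dotProduct_mulVec]
  constructor
  · ext i j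
    simp [Matrix.conjTranspose_apply, Matrix.vecMulVec_apply, mul_comm]
  · intro y
    have h : dotProduct (star y) ((Matrix.vecMulVec x (star x)).mulVec y)
        = (∑ i, star (y i) * x i) * (∑ j, star (x j) * y j) := by
      simp only [dotProduct, Matrix.mulVec, Matrix.vecMulVec_apply, Pi.star_apply,
        Finset.mul_sum, Finset.sum_mul]
      rw [Finset.sum_comm]
      refine Finset.sum_congr rfl fun i _ => Finset.sum_congr rfl fun j _ => ?_
      ring
    rw [h]
    have h2 : (∑ j, star (x j) * y j) = star (∑ i, star (y i) * x i) := by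
      rw [star_sum]
      refine Finset.sum_congr rfl fun i _ => ?_
      rw [star_mul, star_star]
    rw [h2, Complex.star_def, Complex.mul_conj]
    exact Complex.zero_le_real.mpr (Complex.normSq_nonneg _)

lemma vecMulVec_trace (x : n → ℂ) (hx : x ≠ 0) : (Matrix.vecMulVec x (star x)).trace ≠ 0 := by
  have h : (Matrix.vecMulVec x (star x)).trace = ((∑ i, Complex.normSq (x i) : ℝ) : ℂ) := by
    simp only [Matrix.trace, Matrix.diag, Matrix.vecMulVec_apply, Pi.star_apply,
      Complex.star_def, Complex.mul_conj, Complex.ofReal_sum]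
  rw [h]
  rw [Ne, Complex.ofReal_eq_zero]
  intro h0
  have : ∀ i, Complex.normSq (x i) = 0 := by
    intro i
    have := Finset.sum_eq_zero_iff_of_nonneg (fun j _ => Complex.normSq_nonneg (x j)) |>.mp h0
    exact this i (Finset.mem_univ i)
  apply hx
  funext i
  exact Complex.normSq_eq_zero.mp (this i)

end DPIaux

section adjoint
open DPIaux
open scoped Matrix ComplexOrder

variable {A B : Type*} [Fintype A] [DecidableEq A] [Fintype B] [DecidableEq B]
variable (N : Matrix A A ℂ →ₗ[ℂ] Matrix B B ℂ)

/-- the adjoint (dual) map w.r.t. the trace pairing. -/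
noncomputable def adjN : Matrix B B ℂ →ₗ[ℂ] Matrix A A ℂ where
  toFun ω := Matrix.of fun a b => (ω * N (Matrix.single b a 1)).trace
  map_add' x y := by
    ext a b
    simp [Matrix.add_mul]
  map_smul' c x := by
    ext a b
    simp [Matrix.smul_mul]

lemma adjN_apply (ω : Matrix B B ℂ) (a b : A) :
    adjN N ω a b = (ω * N (Matrix.single b a 1)).trace := rfl

lemma adjN_duality (ω : Matrix B B ℂ) (X : Matrix A A ℂ) :
    (adjN N ω * X).trace = (ω * N X).trace := by
  have hX : X = ∑ i, ∑ j, (X i j) • Matrix.single i j (1:ℂ) := by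
    conv_lhs => rw [Matrix.matrix_eq_sum_single X]
    refine Finset.sum_congr rfl fun i _ => Finset.sum_congr rfl fun j _ => ?_
    rw [Matrix.smul_single, smul_eq_mul, mul_one]
  conv_lhs => rw [hX]
  conv_rhs => rw [hX]
  simp only [map_sum, map_smul, Finset.mul_sum, Matrix.mul_smul, Matrix.trace_sum,
    Matrix.trace_smul]
  refine Finset.sum_congr rfl fun i _ => Finset.sum_congr rfl fun j _ => ?_
  congr 1
  rw [Matrix.trace_mul_comm, trace_stdBasisMatrix_mul, adjN_apply]

lemma quad_adjN (X : Matrix B B ℂ) (x : A → ℂ) :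
    dotProduct (star x) ((adjN N X).mulVec x)
      = (X * N (Matrix.vecMulVec x (star x))).trace := by
  have hvv : Matrix.vecMulVec x (star x)
      = ∑ b, ∑ a, (x b * star (x a)) • Matrix.single b a (1:ℂ) := by
    conv_lhs => rw [Matrix.matrix_eq_sum_single (Matrix.vecMulVec x (star x))]
    refine Finset.sum_congr rfl fun b _ => Finset.sum_congr rfl fun a _ => ?_
    rw [Matrix.smul_single, smul_eq_mul, mul_one, Matrix.vecMulVec_apply, Pi.star_apply]
  rw [hvv]
  simp only [map_sum, map_smul, Finset.mul_sum, Matrix.mul_smul, Matrix.trace_sum,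
    Matrix.trace_smul, smul_eq_mul, dotProduct, Matrix.mulVec, adjN_apply, Pi.star_apply]
  rw [Finset.sum_comm]
  refine Finset.sum_congr rfl fun b _ => Finset.sum_congr rfl fun a _ => ?_
  ring

lemma adjN_one (hTP : ∀ X : Matrix A A ℂ, (N X).trace = X.trace) : adjN N 1 = 1 := by
  ext a b
  rw [adjN_apply, Matrix.one_mul, hTP]
  have h := trace_stdBasisMatrix_mul b a (1 : Matrix A A ℂ)
  rw [Matrix.mul_one] at h
  exact h

variable (hpos : ∀ X : Matrix A A ℂ, X.PosSemidef → (N X).PosSemidef)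

include hpos in
lemma map_isHermitian {H : Matrix A A ℂ} (hH : H.IsHermitian) : (N H).IsHermitian := by
  have hdecomp : H = (∑ k, ((max (hH.eigenvalues k) 0 : ℝ) : ℂ) • sproj hH k)
      - ∑ k, ((max (-(hH.eigenvalues k)) 0 : ℝ) : ℂ) • sproj hH k := by
    rw [← Finset.sum_sub_distrib]
    conv_lhs => rw [matrix_eq_sum hH]
    refine Finset.sum_congr rfl fun k _ => ?_
    rw [← sub_smul, ← Complex.ofReal_sub]
    congr 2
    rcases le_total 0 (hH.eigenvalues k) with h | h
    · rw [max_eq_left h, max_eq_right (by linarith)]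
      ring
    · rw [max_eq_right h, max_eq_left (by linarith)]
      ring
  have h1 : (N (∑ k, ((max (hH.eigenvalues k) 0 : ℝ) : ℂ) • sproj hH k)).PosSemidef :=
    hpos _ (posSemidef_sum_smul (fun k => le_max_right _ _) (sproj_posSemidef hH))
  have h2 : (N (∑ k, ((max (-(hH.eigenvalues k)) 0 : ℝ) : ℂ) • sproj hH k)).PosSemidef :=
    hpos _ (posSemidef_sum_smul (fun k => le_max_right _ _) (sproj_posSemidef hH))
  rw [hdecomp, map_sub]
  exact h1.1.sub h2.1

include hpos in
lemma map_star_comm (Y : Matrix A A ℂ) : N Yᴴ = (N Y)ᴴ := by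
  set H1 : Matrix A A ℂ := (2⁻¹ : ℂ) • (Y + Yᴴ) with hH1def
  set H2 : Matrix A A ℂ := (-(2⁻¹) * Complex.I) • (Y - Yᴴ) with hH2def
  have hH1 : H1.IsHermitian := by
    rw [Matrix.IsHermitian, hH1def, Matrix.conjTranspose_smul, Matrix.conjTranspose_add,
      Matrix.conjTranspose_conjTranspose]
    rw [show star (2⁻¹ : ℂ) = 2⁻¹ by simp, add_comm]
  have hH2 : H2.IsHermitian := by
    rw [Matrix.IsHermitian, hH2def, Matrix.conjTranspose_smul, Matrix.conjTranspose_sub,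
      Matrix.conjTranspose_conjTranspose]
    have hs : star (-(2⁻¹) * Complex.I) = -(-(2⁻¹) * Complex.I) := by simp
    rw [hs, neg_smul, ← smul_neg]
    congr 1
    abel
  have hIc : Complex.I * (-(2⁻¹) * Complex.I) = (2⁻¹ : ℂ) := by
    rw [show Complex.I * (-(2⁻¹) * Complex.I) = -(2⁻¹) * (Complex.I * Complex.I) by ring,
      Complex.I_mul_I]
    norm_num
  have hY1 : Y = H1 + Complex.I • H2 := by
    rw [hH1def, hH2def, smul_smul, hIc]
    module
  have hY2 : Yᴴ = H1 - Complex.I • H2 := by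
    rw [hH1def, hH2def, smul_smul, hIc]
    module
  clear hIc
  clear_value H1 H2
  clear hH1def hH2def
  have hN1 : (N H1).IsHermitian := map_isHermitian N hpos hH1
  have hN2 : (N H2).IsHermitian := map_isHermitian N hpos hH2
  have e1 : N Yᴴ = N H1 - Complex.I • N H2 := by
    rw [hY2, map_sub, map_smul]
  have e2 : (N Y)ᴴ = N H1 - Complex.I • N H2 := by
    conv_lhs => rw [hY1, map_add, map_smul]
    rw [Matrix.conjTranspose_add, Matrix.conjTranspose_smul, hN1.eq, hN2.eq,
      show star Complex.I = -Complex.I from Complex.conj_I, neg_smul]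
    abel
  rw [e1, e2]

include hpos in
lemma adjN_isHermitian {X : Matrix B B ℂ} (hX : X.IsHermitian) : (adjN N X).IsHermitian := by
  ext a b
  rw [Matrix.conjTranspose_apply, adjN_apply, adjN_apply]
  rw [← Matrix.trace_conjTranspose, Matrix.conjTranspose_mul, hX.eq, Matrix.trace_mul_comm,
    ← map_star_comm N hpos, stdBasis_conjTranspose']

include hpos in
lemma adjN_posSemidef {X : Matrix B B ℂ} (hX : X.PosSemidef) : (adjN N X).PosSemidef := by
  refine Matrix.PosSemidef.of_dotProduct_mulVec_nonneg (adjN_isHermitian N hpos hX.1) fun x => ?_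
  rw [quad_adjN]
  exact trace_mul_posSemidef hX (hpos _ (vecMulVec_posSemidef x))

include hpos in
lemma adjN_posDef (hTP : ∀ X : Matrix A A ℂ, (N X).trace = X.trace)
    {X : Matrix B B ℂ} (hX : X.PosDef) : (adjN N X).PosDef := by
  refine Matrix.PosDef.of_dotProduct_mulVec_pos (adjN_isHermitian N hpos hX.1) fun x hx => ?_
  rw [quad_adjN]
  refine trace_mul_posDef hX (hpos _ (vecMulVec_posSemidef x)) ?_
  rw [hTP]
  exact vecMulVec_trace x hx

end adjoint

section boundedness
open DPIaux
open scoped Matrix ComplexOrder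

variable {n : Type*} [Fintype n] [DecidableEq n]

lemma trace_one_sum_eig {ρ : Matrix n n ℂ} (hρ : ρ.PosSemidef) (hρtr : ρ.trace = 1) :
    ∑ m, hρ.1.eigenvalues m = 1 := by
  have h := trace_eq_sum_eig hρ.1
  rw [hρtr] at h
  have : ((∑ m, hρ.1.eigenvalues m : ℝ) : ℂ) = ((1:ℝ):ℂ) := by
    rw [Complex.ofReal_sum]
    simp [← h]
  exact_mod_cast this

lemma one_sub_posSemidef {ρ : Matrix n n ℂ} (hρ : ρ.PosSemidef) (hρtr : ρ.trace = 1) :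
    ((1 : Matrix n n ℂ) - ρ).PosSemidef := by
  have heig := trace_one_sum_eig hρ hρtr
  have hle : ∀ m, hρ.1.eigenvalues m ≤ 1 := by
    intro m
    rw [← heig]
    exact Finset.single_le_sum (fun i _ => hρ.eigenvalues_nonneg i) (Finset.mem_univ m)
  have h : (1 : Matrix n n ℂ) - ρ = ∑ m, ((1 - hρ.1.eigenvalues m : ℝ) : ℂ) • sproj hρ.1 m := by
    have h1 := congrArg (fun M => (1 : Matrix n n ℂ) - M) (matrix_eq_sum hρ.1)
    rw [h1, ← sum_sproj hρ.1, ← Finset.sum_sub_distrib]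
    refine Finset.sum_congr rfl fun m _ => ?_
    rw [Complex.ofReal_sub, Complex.ofReal_one, sub_smul, one_smul]
  rw [h]
  exact posSemidef_sum_smul (fun m => by linarith [hle m]) (sproj_posSemidef hρ.1)

lemma exists_c {ρ σ : Matrix n n ℂ} (hρ : ρ.PosSemidef) (hρtr : ρ.trace = 1)
    (hσ : σ.PosSemidef) (hσtr : σ.trace = 1)
    (hsupp : ∀ v : n → ℂ, σ.mulVec v = 0 → ρ.mulVec v = 0) :
    ∃ c : ℝ, 0 < c ∧ ((c : ℂ) • σ - ρ).PosSemidef := by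
  classical
  set d : n → ℝ := hσ.1.eigenvalues with hd
  set Q : n → Matrix n n ℂ := sproj hσ.1 with hQ
  set s0 : Finset n := Finset.univ.filter (fun j => d j ≠ 0) with hs0
  have hs0ne : s0.Nonempty := by
    by_contra h
    rw [Finset.not_nonempty_iff_eq_empty] at h
    have : ∑ j, d j = 1 := trace_one_sum_eig hσ hσtr
    have hz : ∀ j, d j = 0 := by
      intro j
      by_contra hj
      have : j ∈ s0 := by simp [hs0, hj]
      rw [h] at this
      exact absurd this (Finset.notMem_empty j)
    rw [Finset.sum_congr rfl (fun j _ => hz j)] at this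
    simp at this
  set δ : ℝ := s0.inf' hs0ne d with hδ
  have hδpos : 0 < δ := by
    rw [hδ, Finset.lt_inf'_iff]
    intro j hj
    have : d j ≠ 0 := by simpa [hs0] using hj
    exact lt_of_le_of_ne (hσ.eigenvalues_nonneg j) (Ne.symm this)
  -- indicator coefficients
  set e : n → ℝ := fun j => if d j ≠ 0 then 1 else 0 with he
  set P : Matrix n n ℂ := ∑ j, ((e j : ℝ) : ℂ) • Q j with hP
  have hPpsd : P.PosSemidef :=
    posSemidef_sum_smul (fun j => by simp only [he]; split_ifs <;> norm_num)
      (sproj_posSemidef hσ.1)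
  have hPherm : Pᴴ = P := hPpsd.1
  -- (i) δ⁻¹ • σ - P is PSD
  have h1 : ((δ⁻¹ : ℂ) • σ - P).PosSemidef := by
    have hrepr : ((δ⁻¹ : ℂ) • σ - P) = ∑ j, ((δ⁻¹ * d j - e j : ℝ) : ℂ) • Q j := by
      have h2 := congrArg (fun M => (δ⁻¹ : ℂ) • M - P) (matrix_eq_sum hσ.1)
      rw [h2, hP, Finset.smul_sum, ← Finset.sum_sub_distrib]
      refine Finset.sum_congr rfl fun j _ => ?_
      rw [smul_smul, Complex.ofReal_sub, Complex.ofReal_mul, sub_smul]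
      norm_cast
    rw [hrepr]
    refine posSemidef_sum_smul (fun j => ?_) (sproj_posSemidef hσ.1)
    simp only [he]
    split_ifs with hj
    · have hdj : δ ≤ d j := Finset.inf'_le d (by simp [hs0, hj])
      have : 1 ≤ δ⁻¹ * d j := by
        rw [← inv_mul_cancel₀ hδpos.ne']
        exact mul_le_mul_of_nonneg_left hdj (by positivity)
      linarith
    · push_neg at hj
      rw [hj]
      simp
  -- (ii) ρ * Q j = 0 and Q j * ρ = 0 when d j = 0
  have hρQ : ∀ j, d j = 0 → ρ * Q j = 0 := by
    intro j hj
    have hσQ : σ * Q j = 0 := by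
      rw [hQ, mul_sproj hσ.1 j, ← hd, hj]
      simp
    ext i c
    simp only [Matrix.zero_apply]
    have hcol : σ.mulVec (fun k => Q j k c) = 0 := by
      funext i'
      simp only [Pi.zero_apply]
      have e2 : (σ *ᵥ fun k => Q j k c) i' = (σ * Q j) i' c := by
        rw [Matrix.mul_apply]
        rfl
      rw [e2, hσQ, Matrix.zero_apply]
    have h4 := hsupp _ hcol
    have e3 : (ρ * Q j) i c = (ρ *ᵥ fun k => Q j k c) i := by
      rw [Matrix.mul_apply]
      rfl
    rw [e3, h4, Pi.zero_apply]
  have hQρ : ∀ j, d j = 0 → Q j * ρ = 0 := by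
    intro j hj
    have := congrArg Matrix.conjTranspose (hρQ j hj)
    rw [Matrix.conjTranspose_mul, (sproj_posSemidef hσ.1 j).1.eq, hρ.1.eq] at this
    simpa using this
  -- (iii) P * ρ = ρ and ρ * P = ρ
  have hPρ : P * ρ = ρ := by
    rw [hP, Finset.sum_mul]
    have hterm : ∀ j, (((e j : ℝ) : ℂ) • Q j) * ρ = Q j * ρ := by
      intro j
      rw [Matrix.smul_mul]
      by_cases hj : d j = 0
      · rw [hQρ j hj]
        simp [he, hj]
      · simp [he, hj]
    rw [Finset.sum_congr rfl fun j _ => hterm j, ← Finset.sum_mul, hQ, sum_sproj, Matrix.one_mul]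
  have hρP : ρ * P = ρ := by
    have := congrArg Matrix.conjTranspose hPρ
    rw [Matrix.conjTranspose_mul, hρ.1.eq, hPherm] at this
    exact this
  -- (iv) combine
  refine ⟨δ⁻¹, by positivity, ?_⟩
  have hsplit : ((δ⁻¹ : ℝ) : ℂ) • σ - ρ = (((δ⁻¹:ℝ):ℂ) • σ - P) + (Pᴴ * (1 - ρ) * P) := by
    rw [hPherm, Matrix.mul_sub, Matrix.mul_one, Matrix.sub_mul]
    have hPP : P * P = P := by
      rw [hP, sum_smul_sproj_mul hσ.1]
      refine Finset.sum_congr rfl fun j _ => ?_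
      congr 1
      rw [← Complex.ofReal_mul]
      congr 1
      simp only [he]
      split_ifs <;> norm_num
    rw [hPP, hPρ, hρP]
    abel
  rw [hsplit, Complex.ofReal_inv]
  exact h1.add ((one_sub_posSemidef hρ hρtr).conjTranspose_mul_mul_same P)

end boundedness

lemma mlog_eq {n : Type*} [Fintype n] [DecidableEq n] {H : Matrix n n ℂ}
    (hH : H.IsHermitian) : mlog H = hH.cfc Real.log := by
  unfold mlog
  rw [dif_pos hH]

open DPIaux

/-- **Data processing for the measured relative entropy.** For density operators `ρ, σ`
with `supp ρ ⊆ supp σ` and a trace-preserving positive linear map `N`,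
`D_M(N(ρ)‖N(σ)) ≤ D_M(ρ‖σ)`. -/
theorem measured_relative_entropy_DPI
    {A B : Type*} [Fintype A] [DecidableEq A] [Fintype B] [DecidableEq B]
    (ρ σ : Matrix A A ℂ)
    (hρ : ρ.PosSemidef) (hρtr : ρ.trace = 1)
    (hσ : σ.PosSemidef) (hσtr : σ.trace = 1)
    (hsupp : ∀ v : A → ℂ, σ.mulVec v = 0 → ρ.mulVec v = 0)
    (N : Matrix A A ℂ →ₗ[ℂ] Matrix B B ℂ)
    (hTP : ∀ X : Matrix A A ℂ, (N X).trace = X.trace)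
    (hpos : ∀ X : Matrix A A ℂ, X.PosSemidef → (N X).PosSemidef) :
    DMvar (N ρ) (N σ) ≤ DMvar ρ σ := by
  classical
  have hρtrre : (ρ.trace).re = 1 := by rw [hρtr]; simp
  obtain ⟨c, hcpos, hcσρ⟩ := exists_c hρ hρtr hσ hσtr hsupp
  -- uniform bound for the A-side variational family
  have hbound : ∀ ω : {ω : Matrix A A ℂ // ω.PosDef},
      ((ρ * mlog ω.1).trace).re - Real.log ((σ * ω.1).trace).re ≤ Real.log c := by
    rintro ⟨ω, hω⟩
    have hωH : ω.IsHermitian := hω.1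
    have hp : ∀ k, 0 ≤ ((ρ * sproj hωH k).trace).re := fun k =>
      re_nonneg_of (trace_mul_posSemidef hρ (sproj_posSemidef hωH k))
    have hq : ∀ k, 0 ≤ ((σ * sproj hωH k).trace).re := fun k =>
      re_nonneg_of (trace_mul_posSemidef hσ (sproj_posSemidef hωH k))
    have hpc : ∀ k, ((ρ * sproj hωH k).trace).re ≤ c * ((σ * sproj hωH k).trace).re := by
      intro k
      have h0 : (0:ℂ) ≤ (((c:ℂ) • σ - ρ) * sproj hωH k).trace :=
        trace_mul_posSemidef hcσρ (sproj_posSemidef hωH k)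
      have hexp : (((c:ℂ) • σ - ρ) * sproj hωH k).trace
          = (c:ℂ) * (σ * sproj hωH k).trace - (ρ * sproj hωH k).trace := by
        rw [Matrix.sub_mul, Matrix.trace_sub, Matrix.smul_mul, Matrix.trace_smul, smul_eq_mul]
      rw [hexp] at h0
      have h1 := re_nonneg_of h0
      rw [Complex.sub_re, ofReal_mul_re] at h1
      linarith
    have hp1 : ∑ k, ((ρ * sproj hωH k).trace).re = 1 := by
      rw [← Complex.re_sum, sum_trace_mul_sproj hωH ρ, hρtrre]
    have hlam : ∀ k, 0 < hωH.eigenvalues k := hω.eigenvalues_pos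
    have hkey := scalar_bdd (fun k => ((ρ * sproj hωH k).trace).re)
      (fun k => ((σ * sproj hωH k).trace).re) hωH.eigenvalues c hcpos hp hq hlam hpc hp1
    have hL : ((ρ * mlog ω).trace).re
        = ∑ k, ((ρ * sproj hωH k).trace).re * Real.log (hωH.eigenvalues k) := by
      rw [mlog_eq hωH, retr_cfc hωH ρ Real.log]
      exact Finset.sum_congr rfl fun k _ => mul_comm _ _
    have hT : ((σ * ω).trace).re = ∑ k, ((σ * sproj hωH k).trace).re * hωH.eigenvalues k := by
      rw [retr_self hωH σ]
      exact Finset.sum_congr rfl fun k _ => mul_comm _ _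
    rw [hL, hT]
    linarith
  have hBdd : BddAbove (Set.range fun ω : {ω : Matrix A A ℂ // ω.PosDef} =>
      ((ρ * mlog ω.1).trace).re - Real.log ((σ * ω.1).trace).re) := by
    refine ⟨Real.log c, ?_⟩
    rintro v ⟨ω, rfl⟩
    exact hbound ω
  have hne : Nonempty {ω : Matrix B B ℂ // ω.PosDef} := ⟨⟨1, Matrix.PosDef.one⟩⟩
  rw [DMvar, DMvar]
  apply ciSup_le
  rintro ⟨ω, hω⟩
  dsimp only
  have hωH : ω.IsHermitian := hω.1
  have hMpd : (adjN N ω).PosDef := adjN_posDef N hpos hTP hω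
  have hMH : (adjN N ω).IsHermitian := hMpd.1
  have hlam : ∀ k, 0 < hωH.eigenvalues k := hω.eigenvalues_pos
  have hmu : ∀ j, 0 < hMH.eigenvalues j := hMpd.eigenvalues_pos
  have ha : ∀ k, 0 ≤ ((ρ * adjN N (sproj hωH k)).trace).re := fun k =>
    re_nonneg_of (trace_mul_posSemidef hρ (adjN_posSemidef N hpos (sproj_posSemidef hωH k)))
  have hr : ∀ j, 0 ≤ ((ρ * sproj hMH j).trace).re := fun j =>
    re_nonneg_of (trace_mul_posSemidef hρ (sproj_posSemidef hMH j))
  have hA1 : ∑ k, adjN N (sproj hωH k) = 1 := by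
    rw [← map_sum, sum_sproj, adjN_one N hTP]
  have hsuma : ∑ k, ((ρ * adjN N (sproj hωH k)).trace).re = 1 := by
    have h1 : ∑ k, (ρ * adjN N (sproj hωH k)).trace = ρ.trace := by
      rw [← Matrix.trace_sum, ← Finset.mul_sum, hA1, Matrix.mul_one]
    rw [← Complex.re_sum, h1, hρtrre]
  have hsumr : ∑ j, ((ρ * sproj hMH j).trace).re = 1 := by
    rw [← Complex.re_sum, sum_trace_mul_sproj hMH ρ, hρtrre]
  -- resolvent comparison via Choi's inequality
  have hres : ∀ t : ℝ, 0 < t →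
      ∑ j, ((ρ * sproj hMH j).trace).re / (hMH.eigenvalues j + t)
        ≤ ∑ k, ((ρ * adjN N (sproj hωH k)).trace).re / (hωH.eigenvalues k + t) := by
    intro t ht
    have hct : ∀ k, 0 < hωH.eigenvalues k + t := fun k => by linarith [hlam k]
    have hmut : ∀ j, 0 < hMH.eigenvalues j + t := fun j => by linarith [hmu j]
    have hWherm : (∑ j, (((hMH.eigenvalues j + t)⁻¹ : ℝ):ℂ) • sproj hMH j)ᴴ
        = ∑ j, (((hMH.eigenvalues j + t)⁻¹ : ℝ):ℂ) • sproj hMH j := by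
      rw [Matrix.conjTranspose_sum]
      refine Finset.sum_congr rfl fun j _ => ?_
      rw [Matrix.conjTranspose_smul, sproj_conjTranspose, Complex.star_def, Complex.conj_ofReal]
    have hSM : ∑ k, ((hωH.eigenvalues k + t : ℝ):ℂ) • adjN N (sproj hωH k)
        = ∑ j, ((hMH.eigenvalues j + t : ℝ):ℂ) • sproj hMH j := by
      have e1 : ∑ k, ((hωH.eigenvalues k + t : ℝ):ℂ) • sproj hωH k = ω + (t:ℂ) • 1 := by
        have h2 : ∀ k, ((hωH.eigenvalues k + t : ℝ):ℂ) • sproj hωH k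
            = (hωH.eigenvalues k : ℂ) • sproj hωH k + (t:ℂ) • sproj hωH k := by
          intro k
          rw [Complex.ofReal_add, add_smul]
        rw [Finset.sum_congr rfl fun k _ => h2 k, Finset.sum_add_distrib, ← matrix_eq_sum hωH,
          ← Finset.smul_sum, sum_sproj]
      have e2 : ∑ j, ((hMH.eigenvalues j + t : ℝ):ℂ) • sproj hMH j = adjN N ω + (t:ℂ) • 1 := by
        have h2 : ∀ j, ((hMH.eigenvalues j + t : ℝ):ℂ) • sproj hMH j
            = (hMH.eigenvalues j : ℂ) • sproj hMH j + (t:ℂ) • sproj hMH j := by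
          intro j
          rw [Complex.ofReal_add, add_smul]
        rw [Finset.sum_congr rfl fun j _ => h2 j, Finset.sum_add_distrib, ← matrix_eq_sum hMH,
          ← Finset.smul_sum, sum_sproj]
      have e3 : ∑ k, ((hωH.eigenvalues k + t : ℝ):ℂ) • adjN N (sproj hωH k)
          = adjN N (∑ k, ((hωH.eigenvalues k + t : ℝ):ℂ) • sproj hωH k) := by
        rw [map_sum]
        exact Finset.sum_congr rfl fun k _ => (map_smul _ _ _).symm
      rw [e3, e1, map_add, map_smul, adjN_one N hTP, e2]
    have hWS : (∑ j, (((hMH.eigenvalues j + t)⁻¹ : ℝ):ℂ) • sproj hMH j)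
        * (∑ k, ((hωH.eigenvalues k + t : ℝ):ℂ) • adjN N (sproj hωH k)) = 1 := by
      rw [hSM, sum_smul_sproj_mul hMH]
      have h3 : ∀ j, (((hMH.eigenvalues j + t)⁻¹ : ℝ):ℂ) * ((hMH.eigenvalues j + t : ℝ):ℂ)
          = 1 := by
        intro j
        rw [← Complex.ofReal_mul, inv_mul_cancel₀ (hmut j).ne', Complex.ofReal_one]
      rw [Finset.sum_congr rfl fun j _ => by rw [h3 j]]
      simp only [one_smul]
      exact sum_sproj hMH
    have hD := choi (fun k => hωH.eigenvalues k + t) hct (fun k => adjN N (sproj hωH k))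
      (fun k => adjN_posSemidef N hpos (sproj_posSemidef hωH k)) hA1 _ hWherm hWS
    have h0 := re_nonneg_of (trace_mul_posSemidef hρ hD)
    have hexp : (ρ * (∑ k, (((hωH.eigenvalues k + t)⁻¹ : ℝ):ℂ) • adjN N (sproj hωH k)
          - ∑ j, (((hMH.eigenvalues j + t)⁻¹ : ℝ):ℂ) • sproj hMH j)).trace
        = ∑ k, (((hωH.eigenvalues k + t)⁻¹ : ℝ):ℂ) * (ρ * adjN N (sproj hωH k)).trace
          - ∑ j, (((hMH.eigenvalues j + t)⁻¹ : ℝ):ℂ) * (ρ * sproj hMH j).trace := by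
      rw [Matrix.mul_sub, Matrix.trace_sub, trace_mul_repr, trace_mul_repr]
    rw [hexp, Complex.sub_re, Complex.re_sum, Complex.re_sum] at h0
    simp only [ofReal_mul_re] at h0
    simp only [div_eq_inv_mul]
    linarith
  have hfin := scalar_log_le (fun k => ((ρ * adjN N (sproj hωH k)).trace).re)
    (fun j => ((ρ * sproj hMH j).trace).re) hωH.eigenvalues hMH.eigenvalues
    ha hr hlam hmu (by rw [hsuma, hsumr]) hres
  -- identify the two sides
  have hL : ((N ρ * mlog ω).trace).re
      = ∑ k, ((ρ * adjN N (sproj hωH k)).trace).re * Real.log (hωH.eigenvalues k) := by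
    have step1 : (N ρ * mlog ω).trace = (ρ * adjN N (mlog ω)).trace := by
      rw [Matrix.trace_mul_comm (N ρ) (mlog ω), ← adjN_duality N (mlog ω) ρ,
        Matrix.trace_mul_comm]
    have step2 : adjN N (mlog ω) = ∑ k, ((Real.log (hωH.eigenvalues k) : ℝ):ℂ)
        • adjN N (sproj hωH k) := by
      rw [mlog_eq hωH, cfc_eq_sum hωH, map_sum]
      exact Finset.sum_congr rfl fun k _ => map_smul _ _ _
    rw [step1, step2, trace_mul_repr, Complex.re_sum]
    exact Finset.sum_congr rfl fun k _ => by rw [ofReal_mul_re]; ring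
  have hR : ((ρ * mlog (adjN N ω)).trace).re
      = ∑ j, ((ρ * sproj hMH j).trace).re * Real.log (hMH.eigenvalues j) := by
    rw [mlog_eq hMH, retr_cfc hMH ρ Real.log]
    exact Finset.sum_congr rfl fun j _ => mul_comm _ _
  have hG2 : (N σ * ω).trace = (σ * adjN N ω).trace := by
    rw [Matrix.trace_mul_comm (N σ) ω, ← adjN_duality N ω σ, Matrix.trace_mul_comm]
  refine le_ciSup_of_le hBdd ⟨adjN N ω, hMpd⟩ ?_
  have hle : ((N ρ * mlog ω).trace).re ≤ ((ρ * mlog (adjN N ω)).trace).re := by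
    rw [hL, hR]
    exact hfin
  rw [hG2]
  exact sub_le_sub_right hle _
end
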